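/- Converse for the surrogate BES source coding problem: any (k, M, d, ε) code for the ternary memoryless source with P(0) = P(1) = (1 − δ)/2, P(?) = δ, binary reproduction alphabet, and separable surrogate distortion d̄ (with d̄(0,0) = d̄(1,1) = 0, d̄(0,1) = d̄(1,0) = 1, d̄(?,0) = d̄(?,1) = 1/2) must satisfy ε ≥ Σ_{j=0}^{⌊2kd⌋} C(k, j)·δ^j·(1 − δ)^{k−j} · max( 0, 1 − M·2^{−(k−j)}·⟨k−j choose ≤ ⌊kd − j/2⌋⟩ ), where ⟨n choose ≤ m⟩ = Σ_{i=0}^{m} C(n, i), with the conventions ⟨n choose ≤ m⟩ = 0 if m < 0 and ⟨n choose ≤ m⟩ = 2^n if m > n. -/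

import Mathlib

open scoped BigOperators

noncomputable section

/-- The ternary source on `{0, 1, ?}` (erasure symbol `none`):
`P(0) = P(1) = (1−δ)/2`, `P(?) = δ`. -/
def P3 (δ : ℝ) : Option Bool → ℝ :=
  fun x => if x = none then δ else (1 - δ) / 2

/-- The surrogate distortion of the erased-fair-coin-flips problem:
`d̄(0,0) = d̄(1,1) = 0`, `d̄(0,1) = d̄(1,0) = 1`, `d̄(?, z) = 1/2`. -/
def dbarBes : Option Bool → Bool → ℝ :=
  fun x z => match x with
    | none => 1 / 2
    | some b => if b = z then 0 else 1

/-- Sum of binomial coefficients `⟨n choose ≤ m⟩ = Σ_{i=0}^{m} C(n,i)`, with the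
conventions that it is `0` for `m < 0` and `2^n` for `m > n`. -/
def binosum (n : ℕ) (m : ℤ) : ℕ :=
  ∑ i ∈ Finset.range (n + 1), if (i : ℤ) ≤ m then n.choose i else 0

/-- Excess-distortion probability of the code `(f, c)` at blocklength `k`,
distortion threshold `d`, for the ternary memoryless source `P3 δ` and the separable
surrogate distortion `dbarBes`. -/
def excessBes (δ d : ℝ) (k M : ℕ) (f : (Fin k → Option Bool) → Fin M)
    (c : Fin M → (Fin k → Bool)) : ℝ :=
  ∑ x : Fin k → Option Bool, (∏ i, P3 δ (x i)) *
    (if d < (∑ i, dbarBes (x i) (c (f x) i)) / k then (1:ℝ) else 0)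

open Finset

lemma mismatch_dec {k : ℕ} (S T : Finset (Fin k)) (hT : T ⊆ Sᶜ) (w : Fin k → Bool) :
    Sᶜ.filter (fun i =>
      (if i ∈ S then none else some (if i ∈ T then !(w i) else w i)) ≠ some (w i)) = T := by
  ext i
  simp only [mem_filter, mem_compl]
  constructor
  · rintro ⟨hiS, hne⟩
    rw [if_neg hiS] at hne
    by_contra hiT
    rw [if_neg hiT] at hne
    exact hne rfl
  · intro hiT
    have hiS : i ∉ S := mem_compl.mp (hT hiT)
    refine ⟨hiS, ?_⟩
    rw [if_neg hiS, if_pos hiT]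
    simp

lemma count_ball {k : ℕ} (S : Finset (Fin k)) (w : Fin k → Bool) (p : ℕ → Prop)
    [DecidablePred p] :
    (univ.filter (fun x : Fin k → Option Bool =>
        (∀ i, x i = none ↔ i ∈ S) ∧ p ((Sᶜ.filter (fun i => x i ≠ some (w i))).card))).card
      = (Sᶜ.powerset.filter (fun T => p T.card)).card := by
  apply Finset.card_bij'
    (i := fun x _ => Sᶜ.filter (fun i => x i ≠ some (w i)))
    (j := fun T _ => fun i => if i ∈ S then none else some (if i ∈ T then !(w i) else w i))
  · intro x hx
    simp only [mem_filter, mem_univ, true_and] at hx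
    simp only [mem_filter, mem_powerset]
    exact ⟨filter_subset _ _, hx.2⟩
  · intro T hT
    simp only [mem_filter, mem_powerset] at hT
    simp only [mem_filter, mem_univ, true_and]
    constructor
    · intro i
      by_cases hiS : i ∈ S <;> simp [hiS]
    · rw [mismatch_dec S T hT.1 w]
      exact hT.2
  · intro x hx
    simp only [mem_filter, mem_univ, true_and] at hx
    funext i
    by_cases hiS : i ∈ S
    · rw [if_pos hiS, ((hx.1 i).mpr hiS)]
    · rw [if_neg hiS]
      have hxne : x i ≠ none := fun h => hiS ((hx.1 i).mp h)
      obtain ⟨b, hb⟩ := Option.ne_none_iff_exists'.mp hxne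
      by_cases hmem : i ∈ Sᶜ.filter (fun i => x i ≠ some (w i))
      · rw [if_pos hmem, hb]
        have h1 : x i ≠ some (w i) := (mem_filter.mp hmem).2
        rw [hb] at h1
        have h2 : b ≠ w i := fun h => h1 (by rw [h])
        have h3 : b = !(w i) := by cases b <;> cases hw : w i <;> simp_all
        rw [h3]
      · rw [if_neg hmem, hb]
        have h1 : ¬ (x i ≠ some (w i)) :=
          fun h => hmem (mem_filter.mpr ⟨mem_compl.mpr hiS, h⟩)
        push_neg at h1
        rw [hb] at h1
        exact h1.symm
  · intro T hT
    simp only [mem_filter, mem_powerset] at hT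
    simpa using mismatch_dec S T hT.1 w

lemma count_powerset {ι : Type*} [DecidableEq ι] (U : Finset ι) (m : ℤ) :
    (U.powerset.filter (fun T => (T.card : ℤ) ≤ m)).card = binosum U.card m := by
  rw [Finset.card_eq_sum_card_fiberwise (f := Finset.card) (t := Finset.range (U.card + 1))
      (fun T hT => by
        simp only [mem_coe, mem_filter, mem_powerset] at hT
        exact mem_range.mpr (Nat.lt_succ_of_le (card_le_card hT.1)))]
  unfold binosum
  apply Finset.sum_congr rfl
  intro t _
  by_cases h : (t : ℤ) ≤ m
  · rw [if_pos h, ← Finset.card_powersetCard t U]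
    congr 1
    rw [Finset.powersetCard_eq_filter, Finset.filter_filter]
    apply Finset.filter_congr
    intro T hT
    constructor
    · rintro ⟨_, h2⟩; exact h2
    · intro h2; exact ⟨by rw [h2]; exact h, h2⟩
  · rw [if_neg h, Finset.card_eq_zero, Finset.filter_eq_empty_iff]
    rintro T hT rfl
    exact h (mem_filter.mp hT).2

lemma prod_P3 {k : ℕ} (δ : ℝ) (S : Finset (Fin k)) (x : Fin k → Option Bool)
    (hx : ∀ i, x i = none ↔ i ∈ S) :
    ∏ i, P3 δ (x i) = δ ^ S.card * ((1 - δ) / 2) ^ Sᶜ.card := by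
  rw [← Finset.prod_mul_prod_compl S]
  congr 1
  · rw [Finset.prod_congr rfl (fun i hi => ?_), Finset.prod_const]
    simp [P3, (hx i).mpr hi]
  · rw [Finset.prod_congr rfl (fun i hi => ?_), Finset.prod_const]
    have : x i ≠ none := fun h => (mem_compl.mp hi) ((hx i).mp h)
    simp [P3, this]

lemma dist_sum {k : ℕ} (S : Finset (Fin k)) (x : Fin k → Option Bool)
    (hx : ∀ i, x i = none ↔ i ∈ S) (w : Fin k → Bool) :
    ∑ i, dbarBes (x i) (w i)
      = (S.card : ℝ) * (1 / 2) + ((Sᶜ.filter (fun i => x i ≠ some (w i))).card : ℝ) := by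
  rw [← Finset.sum_add_sum_compl S]
  congr 1
  · rw [Finset.sum_congr rfl (fun i hi => ?_), Finset.sum_const]
    · rw [nsmul_eq_mul]
    · rw [(hx i).mpr hi]; rfl
  · have hterm : ∀ i ∈ Sᶜ, dbarBes (x i) (w i) = if x i ≠ some (w i) then (1:ℝ) else 0 := by
      intro i hi
      have hxne : x i ≠ none := fun h => (mem_compl.mp hi) ((hx i).mp h)
      obtain ⟨b, hb⟩ := Option.ne_none_iff_exists'.mp hxne
      rw [hb]
      show dbarBes (some b) (w i) = _
      unfold dbarBes
      by_cases hbw : b = w i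
      · simp [hbw]
      · have h2 : some b ≠ some (w i) := fun h => hbw (by injection h)
        simp [hbw, h2]
    rw [Finset.sum_congr rfl hterm, Finset.sum_boole]

lemma inner_bound (δ d : ℝ) (hδ0 : 0 < δ) (hδ1 : δ < 1) {k M : ℕ} (hk : 0 < k)
    (f : (Fin k → Option Bool) → Fin M) (c : Fin M → Fin k → Bool) (S : Finset (Fin k)) :
    δ ^ S.card * ((1 - δ) / 2) ^ (k - S.card) *
        max 0 ((2:ℝ) ^ (k - S.card)
          - (M : ℝ) * (binosum (k - S.card) ⌊(k:ℝ) * d - (S.card:ℝ) / 2⌋ : ℝ))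
      ≤ ∑ x ∈ Finset.univ.filter (fun x : Fin k → Option Bool => ∀ i, x i = none ↔ i ∈ S),
          (∏ i, P3 δ (x i)) *
            (if d < (∑ i, dbarBes (x i) (c (f x) i)) / k then (1:ℝ) else 0) := by
  have hSc : Sᶜ.card = k - S.card := by
    rw [Finset.card_compl, Fintype.card_fin]
  set j := S.card with hj
  set n := k - j with hn
  set m := ⌊(k:ℝ) * d - (j:ℝ) / 2⌋ with hm
  set fib := univ.filter (fun x : Fin k → Option Bool => ∀ i, x i = none ↔ i ∈ S) with hfib
  set p : (Fin k → Option Bool) → Prop :=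
    fun x => m < ((Sᶜ.filter (fun i => x i ≠ some (c (f x) i))).card : ℤ) with hp
  have h1δ : (0:ℝ) ≤ (1 - δ) / 2 := by linarith
  have hcoef : (0:ℝ) ≤ δ ^ j * ((1 - δ) / 2) ^ n :=
    mul_nonneg (pow_nonneg hδ0.le _) (pow_nonneg h1δ _)
  have hsum : (∑ x ∈ fib, (∏ i, P3 δ (x i)) *
        (if d < (∑ i, dbarBes (x i) (c (f x) i)) / k then (1:ℝ) else 0))
      = δ ^ j * ((1 - δ) / 2) ^ n * ((fib.filter p).card : ℝ) := by
    have hterm : ∀ x ∈ fib, (∏ i, P3 δ (x i)) *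
          (if d < (∑ i, dbarBes (x i) (c (f x) i)) / k then (1:ℝ) else 0)
        = δ ^ j * ((1 - δ) / 2) ^ n * (if p x then (1:ℝ) else 0) := by
      intro x hx
      have hx' : ∀ i, x i = none ↔ i ∈ S := by
        rw [hfib, mem_filter] at hx
        exact hx.2
      have hkpos : (0:ℝ) < k := by exact_mod_cast hk
      have hiff : (d < (∑ i, dbarBes (x i) (c (f x) i)) / k) ↔ p x := by
        rw [lt_div_iff₀ hkpos, dist_sum S x hx' (c (f x)), ← hj]
        show _ ↔ m < _
        rw [hm, Int.floor_lt]
        push_cast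
        constructor <;> intro h <;> linarith
      rw [prod_P3 δ S x hx', hSc]
      congr 1
      simp only [hiff]
    rw [Finset.sum_congr rfl hterm, ← Finset.mul_sum, Finset.sum_boole]
  rw [hsum]
  apply mul_le_mul_of_nonneg_left _ hcoef
  apply max_le (Nat.cast_nonneg _)
  have hfibcard : fib.card = 2 ^ n := by
    have h := count_ball S (fun _ => false) (fun _ => True)
    rw [hfib]
    simpa [Finset.card_powerset, hSc] using h
  have hball : ∀ w : Fin M,
      (fib.filter (fun x => ((Sᶜ.filter (fun i => x i ≠ some ((c w) i))).card : ℤ) ≤ m)).card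
        = binosum n m := by
    intro w
    rw [hfib, Finset.filter_filter]
    rw [count_ball S (c w) (fun t => (t:ℤ) ≤ m), count_powerset, hSc]
  have hsplit := Finset.card_filter_add_card_filter_not (s := fib) p
  have hnon : (fib.filter (fun x => ¬ p x)).card ≤ M * binosum n m := by
    rw [Finset.card_eq_sum_card_fiberwise (f := f) (t := univ) (fun _ _ => mem_univ _)]
    calc ∑ w : Fin M, ((fib.filter (fun x => ¬ p x)).filter (fun x => f x = w)).card
        ≤ ∑ _w : Fin M, binosum n m := by
          apply Finset.sum_le_sum
          intro w _
          rw [← hball w]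
          apply Finset.card_le_card
          intro x hx
          rw [mem_filter] at hx
          obtain ⟨hx1, hfx⟩ := hx
          rw [mem_filter] at hx1 ⊢
          refine ⟨hx1.1, ?_⟩
          have h2 := not_lt.mp hx1.2
          rwa [hfx] at h2
      _ = M * binosum n m := by
          rw [Finset.sum_const, Finset.card_univ, Fintype.card_fin, smul_eq_mul]
  have hcast : ((fib.filter p).card : ℝ) + ((fib.filter (fun x => ¬ p x)).card : ℝ)
      = 2 ^ n := by
    rw [← Nat.cast_add, hsplit, hfibcard]
    push_cast
    ring
  have hnon' : ((fib.filter (fun x => ¬ p x)).card : ℝ) ≤ (M:ℝ) * (binosum n m : ℝ) := by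
    exact_mod_cast hnon
  linarith

/-- **Converse for the surrogate BES source coding problem** (Theorem 6):
any `(k, M, d, ε)` code for the ternary memoryless source with binary reproduction
alphabet and surrogate distortion `d̄` must satisfy
`ε ≥ Σ_{j=0}^{⌊2kd⌋} C(k,j) δ^j (1−δ)^{k−j} · max(0, 1 − M 2^{−(k−j)} ⟨k−j choose ≤ ⌊kd − j/2⌋⟩)`. -/
theorem converse_surrogate_BES
    (δ d ε : ℝ) (hδ0 : 0 < δ) (hδ1 : δ < 1) (hd : 0 ≤ d)
    (k M : ℕ) (hk : 0 < k) (hM : 0 < M)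
    (f : (Fin k → Option Bool) → Fin M) (c : Fin M → (Fin k → Bool))
    (hcode : excessBes δ d k M f c ≤ ε) :
    ε ≥ ∑ j ∈ Finset.range ((⌊2 * (k : ℝ) * d⌋).toNat + 1),
          (k.choose j : ℝ) * δ ^ j * (1 - δ) ^ (k - j) *
            max 0 (1 - (M : ℝ) * ((2 : ℝ) ^ (k - j))⁻¹ *
              (binosum (k - j) ⌊(k : ℝ) * d - (j : ℝ) / 2⌋ : ℝ)) := by
  set J := (⌊2 * (k : ℝ) * d⌋).toNat with hJ
  set B : ℕ → ℝ := fun j => δ ^ j * ((1 - δ) / 2) ^ (k - j) *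
      max 0 ((2:ℝ) ^ (k - j) - (M : ℝ) * (binosum (k - j) ⌊(k:ℝ) * d - (j:ℝ) / 2⌋ : ℝ))
    with hB
  have key : (∑ S : Finset (Fin k), if S.card ≤ J then B S.card else 0)
      ≤ excessBes δ d k M f c := by
    unfold excessBes
    rw [← Finset.sum_fiberwise univ
        (fun x : Fin k → Option Bool => univ.filter (fun i => x i = none))
        (fun x => (∏ i, P3 δ (x i)) *
          (if d < (∑ i, dbarBes (x i) (c (f x) i)) / k then (1:ℝ) else 0))]
    apply Finset.sum_le_sum
    intro S _
    have hfilter : (univ.filter (fun x : Fin k → Option Bool =>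
          univ.filter (fun i => x i = none) = S))
        = univ.filter (fun x : Fin k → Option Bool => ∀ i, x i = none ↔ i ∈ S) := by
      apply Finset.filter_congr
      intro x _
      simp [Finset.ext_iff]
    by_cases hcard : S.card ≤ J
    · rw [if_pos hcard, hfilter, hB]
      exact inner_bound δ d hδ0 hδ1 hk f c S
    · rw [if_neg hcard]
      apply Finset.sum_nonneg
      intro x _
      apply mul_nonneg
      · apply Finset.prod_nonneg
        intro i _
        unfold P3
        split <;> linarith
      · split <;> norm_num
  have heq : (∑ S : Finset (Fin k), if S.card ≤ J then B S.card else 0)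
      = ∑ j ∈ Finset.range (J + 1), (k.choose j : ℝ) * δ ^ j * (1 - δ) ^ (k - j) *
            max 0 (1 - (M : ℝ) * ((2 : ℝ) ^ (k - j))⁻¹ *
              (binosum (k - j) ⌊(k : ℝ) * d - (j : ℝ) / 2⌋ : ℝ)) := by
    rw [← Finset.sum_filter]
    rw [← Finset.sum_fiberwise_of_maps_to (g := Finset.card) (t := Finset.range (J+1))
        (fun S hS => Finset.mem_range.mpr (Nat.lt_succ_of_le (Finset.mem_filter.mp hS).2))
        (fun S => B S.card)]
    apply Finset.sum_congr rfl
    intro jj hjj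
    have hjle : jj ≤ J := Nat.lt_succ_iff.mp (Finset.mem_range.mp hjj)
    have hff : ((univ.filter (fun S : Finset (Fin k) => S.card ≤ J)).filter
          (fun S => S.card = jj)) = univ.filter (fun S : Finset (Fin k) => S.card = jj) := by
      rw [Finset.filter_filter]
      apply Finset.filter_congr
      intro S _
      constructor
      · rintro ⟨_, h⟩; exact h
      · intro h; exact ⟨h ▸ hjle, h⟩
    rw [hff]
    have hcount : (univ.filter (fun S : Finset (Fin k) => S.card = jj)).card
        = k.choose jj := by
      have h1 : univ.filter (fun S : Finset (Fin k) => S.card = jj)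
          = Finset.powersetCard jj univ := by
        rw [Finset.powersetCard_eq_filter, Finset.powerset_univ]
      rw [h1, Finset.card_powersetCard, Finset.card_univ, Fintype.card_fin]
    have hsum2 : ∑ S ∈ univ.filter (fun S : Finset (Fin k) => S.card = jj), B S.card
        = (k.choose jj : ℝ) * B jj := by
      rw [Finset.sum_congr rfl (fun S hS => by rw [(Finset.mem_filter.mp hS).2]),
        Finset.sum_const, nsmul_eq_mul, hcount]
    rw [hsum2, hB]
    have h2n : (0:ℝ) < 2 ^ (k - jj) := by positivity
    have hmax : max 0 (1 - (M:ℝ) * ((2:ℝ) ^ (k - jj))⁻¹ *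
          (binosum (k - jj) ⌊(k:ℝ) * d - (jj:ℝ) / 2⌋ : ℝ))
        = ((2:ℝ) ^ (k - jj))⁻¹ * max 0 ((2:ℝ) ^ (k - jj) - (M:ℝ) *
          (binosum (k - jj) ⌊(k:ℝ) * d - (jj:ℝ) / 2⌋ : ℝ)) := by
      rw [mul_max_of_nonneg _ _ (inv_nonneg.mpr h2n.le), mul_zero]
      congr 1
      rw [mul_sub, inv_mul_cancel₀ (ne_of_gt h2n)]
      ring
    rw [hmax]
    simp only [div_pow]
    field_simp
  rw [ge_iff_le, ← heq]
  exact le_trans key hcode
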